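/- Let n ≥ 3, f ≥ 1 and s, m ≥ 0 be integers. Then, with g = h = k = 0, p(n,s,m,f=,0=,0=,0=) = Σ_{y ∈ Y} w(f,0,0;y) · p(n−yf, s, m, min{n−yf−1, f−1}≤, s≤, m≤, m≤). (Paper's Lemma 2(i).) -/

import Mathlib

/-- Rooted tree-like multigraph (list-based representative): a root carrying a
self-loop count together with a list of children, each child being a pair of an
edge multiplicity (number of multiple edges, i.e. copies beyond the first, of the
edge joining the root to the child's root) and a rooted tree-like multigraph. -/
inductive PreRTM : Type where
  | node : ℕ → List (ℕ × PreRTM) → PreRTM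

namespace PreRTM

/-- self-loop count of the root -/
def loops : PreRTM → ℕ
  | .node l _ => l

/-- the children of the root -/
def children : PreRTM → List (ℕ × PreRTM)
  | .node _ cs => cs

/-- number of vertices -/
def vcount : PreRTM → ℕ
  | .node _ cs => 1 + (cs.attach.map (fun c => vcount c.1.2)).sum
decreasing_by
  rcases c with ⟨⟨e, Q⟩, hc⟩
  have h1 := List.sizeOf_lt_of_mem hc
  simp only [Prod.mk.sizeOf_spec, PreRTM.node.sizeOf_spec] at *
  omega

/-- total number of self-loops -/
def scount : PreRTM → ℕ
  | .node l cs => l + (cs.attach.map (fun c => scount c.1.2)).sum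
decreasing_by
  rcases c with ⟨⟨e, Q⟩, hc⟩
  have h1 := List.sizeOf_lt_of_mem hc
  simp only [Prod.mk.sizeOf_spec, PreRTM.node.sizeOf_spec] at *
  omega

/-- total number of multiple edges -/
def ecount : PreRTM → ℕ
  | .node _ cs => (cs.attach.map (fun c => c.1.1 + ecount c.1.2)).sum
decreasing_by
  rcases c with ⟨⟨e, Q⟩, hc⟩
  have h1 := List.sizeOf_lt_of_mem hc
  simp only [Prod.mk.sizeOf_spec, PreRTM.node.sizeOf_spec] at *
  omega

/-- Max_v: maximum number of vertices in a descendant subtree of the root (0 if none) -/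
def maxV (P : PreRTM) : ℕ :=
  (P.children.map (fun c => c.2.vcount)).foldr max 0

/-- Max_s: maximum number of self-loops among descendant subtrees with `vcount = maxV` -/
def maxS (P : PreRTM) : ℕ :=
  (((P.children.filter (fun c => c.2.vcount == P.maxV)).map (fun c => c.2.scount)).foldr max 0)

/-- Max_m: maximum number of multiple edges among descendant subtrees with `vcount = maxV` -/
def maxM (P : PreRTM) : ℕ :=
  (((P.children.filter (fun c => c.2.vcount == P.maxV)).map (fun c => c.2.ecount)).foldr max 0)

/-- Max_l: maximum multiplicity of the root edge among descendant subtrees with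
`vcount = maxV` and `ecount = maxM` -/
def maxL (P : PreRTM) : ℕ :=
  (((P.children.filter (fun c => c.2.vcount == P.maxV && c.2.ecount == P.maxM)).map
      (fun c => c.1)).foldr max 0)

mutual
  /-- root-preserving isomorphism: equal root self-loop counts and equal multisets of children -/
  inductive REquiv : PreRTM → PreRTM → Prop where
    | node (l : ℕ) {cs cs' : List (ℕ × PreRTM)} :
        LEquiv cs cs' → REquiv (.node l cs) (.node l cs')
  /-- lists of children agree as multisets, up to `REquiv` of the subtrees -/
  inductive LEquiv : List (ℕ × PreRTM) → List (ℕ × PreRTM) → Prop where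
    | nil : LEquiv [] []
    | cons {e : ℕ} {P Q : PreRTM} {l₁ l₂ : List (ℕ × PreRTM)} :
        REquiv P Q → LEquiv l₁ l₂ → LEquiv ((e, P) :: l₁) ((e, Q) :: l₂)
    | swap (a b : ℕ × PreRTM) (l : List (ℕ × PreRTM)) : LEquiv (a :: b :: l) (b :: a :: l)
    | trans {l₁ l₂ l₃ : List (ℕ × PreRTM)} : LEquiv l₁ l₂ → LEquiv l₂ l₃ → LEquiv l₁ l₃
end

end PreRTM

/-- Rooted tree-like multigraphs, up to root-preserving isomorphism. -/
def RTM : Type := Quot PreRTM.REquiv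

/-- the isomorphism class of a representative -/
def cls (P : PreRTM) : RTM := Quot.mk PreRTM.REquiv P

namespace PreRTM

/-- `P` has `n` vertices, `s` self-loops and `m` multiple edges -/
def memP (n s m : ℤ) (P : PreRTM) : Prop :=
  (P.vcount : ℤ) = n ∧ (P.scount : ℤ) = s ∧ (P.ecount : ℤ) = m

/-- membership in 𝒫(n,s,m,f≤,g≤,h≤,k≤) -/
def memLLLL (n s m f g h k : ℤ) (P : PreRTM) : Prop :=
  memP n s m P ∧ (P.maxV : ℤ) ≤ f ∧ (P.maxS : ℤ) ≤ g ∧ (P.maxM : ℤ) ≤ h ∧ (P.maxL : ℤ) ≤ k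

/-- membership in 𝒫(n,s,m,f=,g≤,h≤,k≤) -/
def memELLL (n s m f g h k : ℤ) (P : PreRTM) : Prop :=
  memLLLL n s m f g h k P ∧ (P.maxV : ℤ) = f

/-- membership in 𝒫(n,s,m,f=,g=,h≤,k≤) -/
def memEELL (n s m f g h k : ℤ) (P : PreRTM) : Prop :=
  memELLL n s m f g h k P ∧ (P.maxS : ℤ) = g

/-- membership in 𝒫(n,s,m,f=,g=,h=,k≤) -/
def memEEEL (n s m f g h k : ℤ) (P : PreRTM) : Prop :=
  memEELL n s m f g h k P ∧ (P.maxM : ℤ) = h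

/-- membership in 𝒫(n,s,m,f=,g=,h=,k=) -/
def memEEEE (n s m f g h k : ℤ) (P : PreRTM) : Prop :=
  memEEEL n s m f g h k P ∧ (P.maxL : ℤ) = k

end PreRTM

/-- the family 𝒫(n,s,m,f≤,g≤,h≤,k≤) of isomorphism classes -/
def famLLLL (n s m f g h k : ℤ) : Set RTM := cls '' {P | P.memLLLL n s m f g h k}
/-- the family 𝒫(n,s,m,f=,g≤,h≤,k≤) of isomorphism classes -/
def famELLL (n s m f g h k : ℤ) : Set RTM := cls '' {P | P.memELLL n s m f g h k}
/-- the family 𝒫(n,s,m,f=,g=,h≤,k≤) of isomorphism classes -/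
def famEELL (n s m f g h k : ℤ) : Set RTM := cls '' {P | P.memEELL n s m f g h k}
/-- the family 𝒫(n,s,m,f=,g=,h=,k≤) of isomorphism classes -/
def famEEEL (n s m f g h k : ℤ) : Set RTM := cls '' {P | P.memEEEL n s m f g h k}
/-- the family 𝒫(n,s,m,f=,g=,h=,k=) of isomorphism classes -/
def famEEEE (n s m f g h k : ℤ) : Set RTM := cls '' {P | P.memEEEE n s m f g h k}

/-- p(n,s,m,f≤,g≤,h≤,k≤) -/
noncomputable def pLLLL (n s m f g h k : ℤ) : ℕ := (famLLLL n s m f g h k).ncard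
/-- p(n,s,m,f=,g≤,h≤,k≤) -/
noncomputable def pELLL (n s m f g h k : ℤ) : ℕ := (famELLL n s m f g h k).ncard
/-- p(n,s,m,f=,g=,h≤,k≤) -/
noncomputable def pEELL (n s m f g h k : ℤ) : ℕ := (famEELL n s m f g h k).ncard
/-- p(n,s,m,f=,g=,h=,k≤) -/
noncomputable def pEEEL (n s m f g h k : ℤ) : ℕ := (famEEEL n s m f g h k).ncard
/-- p(n,s,m,f=,g=,h=,k=) -/
noncomputable def pEEEE (n s m f g h k : ℤ) : ℕ := (famEEEE n s m f g h k).ncard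

/-- w(f,g,h;z) = C(p(f,g,h,(f−1)≤,g≤,h≤,h≤) + z − 1, z) -/
noncomputable def w (f g h : ℤ) (z : ℕ) : ℕ :=
  (pLLLL f g h (f - 1) g h h + z - 1).choose z

/-- the index set Y : integers y with 1 ≤ y ≤ ⌊(n−1)/f⌋, additionally y ≤ ⌊s/g⌋ when g ≥ 1
and y ≤ ⌊m/(h+k)⌋ when h+k ≥ 1 -/
noncomputable def Yset (n s m f g h k : ℤ) : Finset ℤ :=
  (Finset.Icc 1 ((n - 1) / f)).filter
    (fun y => (1 ≤ g → y ≤ s / g) ∧ (1 ≤ h + k → y ≤ m / (h + k)))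

namespace PreRTM

mutual
theorem requiv_refl : ∀ P : PreRTM, REquiv P P
  | .node l cs => .node l (lequiv_refl cs)
theorem lequiv_refl : ∀ cs : List (ℕ × PreRTM), LEquiv cs cs
  | [] => .nil
  | (_, P) :: t => .cons (requiv_refl P) (lequiv_refl t)
end

theorem requiv_symm : ∀ {P Q}, REquiv P Q → REquiv Q P := fun h =>
  PreRTM.REquiv.rec (motive_1 := fun P Q _ => REquiv Q P)
    (motive_2 := fun cs cs' _ => LEquiv cs' cs)
    (fun l _ _ _ ih => .node l ih) .nil (fun _ _ ih1 ih2 => .cons ih1 ih2)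
    (fun a b l => .swap b a l)
    (fun _ _ ih1 ih2 => .trans ih2 ih1) h

theorem requiv_trans {P Q R} (h1 : REquiv P Q) (h2 : REquiv Q R) : REquiv P R := by
  cases h1 with
  | node l hl1 => cases h2 with
    | node _ hl2 => exact .node l (.trans hl1 hl2)

theorem requiv_equivalence : Equivalence REquiv :=
  ⟨requiv_refl, requiv_symm, fun h1 h2 => requiv_trans h1 h2⟩

theorem cls_eq_iff_requiv {P Q : PreRTM} : cls P = cls Q ↔ REquiv P Q := by
  constructor
  · intro h
    have := Quot.eq.1 h
    exact (requiv_equivalence.eqvGen_iff).1 this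
  · exact Quot.sound

/-- children as a multiset of (multiplicity, class) pairs -/
def chM (P : PreRTM) : Multiset (ℕ × RTM) :=
  (P.children.map (fun c => (c.1, cls c.2)) : List (ℕ × RTM))

theorem vcount_node (l : ℕ) (cs : List (ℕ × PreRTM)) :
    vcount (.node l cs) = 1 + (cs.map (fun c => vcount c.2)).sum := by
  rw [vcount]
  congr 1
  exact congrArg List.sum (List.attach_map_val (l := cs) (f := fun c => vcount c.2))

theorem scount_node (l : ℕ) (cs : List (ℕ × PreRTM)) :
    scount (.node l cs) = l + (cs.map (fun c => scount c.2)).sum := by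
  rw [scount]
  congr 1
  exact congrArg List.sum (List.attach_map_val (l := cs) (f := fun c => scount c.2))

theorem ecount_node (l : ℕ) (cs : List (ℕ × PreRTM)) :
    ecount (.node l cs) = (cs.map (fun c => c.1 + ecount c.2)).sum := by
  rw [ecount]
  exact congrArg List.sum (List.attach_map_val (l := cs) (f := fun c => c.1 + ecount c.2))


theorem requiv_invar : ∀ {P Q}, REquiv P Q →
    vcount P = vcount Q ∧ scount P = scount Q ∧ ecount P = ecount Q ∧
    P.loops = Q.loops ∧ chM P = chM Q := fun h =>
  PreRTM.REquiv.rec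
    (motive_1 := fun P Q _ => vcount P = vcount Q ∧ scount P = scount Q ∧
      ecount P = ecount Q ∧ P.loops = Q.loops ∧ chM P = chM Q)
    (motive_2 := fun cs cs' _ =>
      (cs.map (fun c => vcount c.2)).sum = (cs'.map (fun c => vcount c.2)).sum ∧
      (cs.map (fun c => scount c.2)).sum = (cs'.map (fun c => scount c.2)).sum ∧
      (cs.map (fun c => c.1 + ecount c.2)).sum = (cs'.map (fun c => c.1 + ecount c.2)).sum ∧
      ((cs.map (fun c => (c.1, cls c.2)) : List (ℕ × RTM)) : Multiset (ℕ × RTM)) =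
        ((cs'.map (fun c => (c.1, cls c.2)) : List (ℕ × RTM)) : Multiset (ℕ × RTM)))
    (fun l _ _ _ ih =>
      ⟨by rw [vcount_node, vcount_node, ih.1],
       by rw [scount_node, scount_node, ih.2.1],
       by rw [ecount_node, ecount_node, ih.2.2.1],
       rfl,
       by simpa [chM, children] using ih.2.2.2⟩)
    ⟨rfl, rfl, rfl, rfl⟩
    (fun hr _ ih1 ih2 =>
      ⟨by simp [ih1.1, ih2.1],
       by simp [ih1.2.1, ih2.2.1],
       by simp [ih1.2.2.1, ih2.2.2.1],
       by
         rw [List.map_cons, List.map_cons, ← Multiset.cons_coe, ← Multiset.cons_coe,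
             ih2.2.2.2]
         congr 2
         exact Quot.sound hr⟩)
    (fun a b l =>
      ⟨by simp; ring, by simp; ring, by simp; ring,
       by rw [List.map_cons, List.map_cons, List.map_cons, List.map_cons,
              ← Multiset.cons_coe, ← Multiset.cons_coe, ← Multiset.cons_coe,
              ← Multiset.cons_coe, Multiset.cons_swap]⟩)
    (fun _ _ ih1 ih2 =>
      ⟨ih1.1.trans ih2.1, ih1.2.1.trans ih2.2.1, ih1.2.2.1.trans ih2.2.2.1,
       ih1.2.2.2.trans ih2.2.2.2⟩)
    h

end PreRTM
namespace PreRTM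

theorem lequiv_of_perm : ∀ {cs cs' : List (ℕ × PreRTM)}, cs.Perm cs' → LEquiv cs cs' := by
  intro cs cs' h
  induction h with
  | nil => exact .nil
  | cons x _ ih => exact .cons (requiv_refl _) ih
  | swap x y l => exact .swap y x l
  | trans _ _ ih1 ih2 => exact .trans ih1 ih2

theorem lequiv_of_chM_eq : ∀ (cs cs' : List (ℕ × PreRTM)),
    ((cs.map (fun c => (c.1, cls c.2)) : List (ℕ × RTM)) : Multiset (ℕ × RTM)) =
      ((cs'.map (fun c => (c.1, cls c.2)) : List (ℕ × RTM)) : Multiset (ℕ × RTM)) →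
    LEquiv cs cs' := by
  classical
  intro cs
  induction cs with
  | nil =>
    intro cs' h
    have h2 : cs'.map (fun c => (c.1, cls c.2)) = [] := by
      have := h.symm
      simp only [List.map_nil, Multiset.coe_nil] at this
      rwa [Multiset.coe_eq_zero] at this
    rw [List.map_eq_nil_iff.1 h2]
    exact .nil
  | cons c t ih =>
    intro cs' h
    have hmem : (c.1, cls c.2) ∈ cs'.map (fun d => (d.1, cls d.2)) := by
      have hm : (c.1, cls c.2) ∈
          ((cs'.map (fun d => (d.1, cls d.2)) : List (ℕ × RTM)) : Multiset (ℕ × RTM)) := by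
        rw [← h]; simp
      simpa using hm
    obtain ⟨d, hd, hde⟩ := List.mem_map.1 hmem
    obtain ⟨l₁, l₂, rfl⟩ := List.append_of_mem hd
    have hperm : (l₁ ++ d :: l₂).Perm (d :: (l₁ ++ l₂)) := List.perm_middle
    have hmap : (((l₁ ++ d :: l₂).map (fun c => (c.1, cls c.2)) : List (ℕ × RTM)) : Multiset (ℕ × RTM)) =
        (d.1, cls d.2) ::ₘ
          (((l₁ ++ l₂).map (fun c => (c.1, cls c.2)) : List (ℕ × RTM)) : Multiset (ℕ × RTM)) := by
      have h3 := hperm.map (fun c => (c.1, cls c.2))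
      rw [Multiset.coe_eq_coe.2 h3]
      simp
    rw [hmap] at h
    simp only [List.map_cons, ← Multiset.cons_coe] at h
    rw [← hde] at h
    have htail : ((t.map (fun c => (c.1, cls c.2)) : List (ℕ × RTM)) : Multiset (ℕ × RTM)) =
        (((l₁ ++ l₂).map (fun c => (c.1, cls c.2)) : List (ℕ × RTM)) : Multiset (ℕ × RTM)) :=
      (Multiset.cons_inj_right _).1 h
    have hind := ih (l₁ ++ l₂) htail
    have hhead : REquiv c.2 d.2 := cls_eq_iff_requiv.1 (congrArg Prod.snd hde).symm
    have h1 : c.1 = d.1 := (congrArg Prod.fst hde).symm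
    have hl : LEquiv (c :: t) (d :: (l₁ ++ l₂)) := by
      obtain ⟨e, P⟩ := c
      obtain ⟨e', Q⟩ := d
      simp only at h1
      subst h1
      exact .cons hhead hind
    exact hl.trans (lequiv_of_perm hperm.symm)

theorem cls_eq_iff {P Q : PreRTM} :
    cls P = cls Q ↔ (P.loops = Q.loops ∧ chM P = chM Q) := by
  constructor
  · intro h
    have h2 := requiv_invar (cls_eq_iff_requiv.1 h)
    exact ⟨h2.2.2.2.1, h2.2.2.2.2⟩
  · rintro ⟨h1, h2⟩
    obtain ⟨l, cs⟩ := P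
    obtain ⟨l', cs'⟩ := Q
    simp only [loops] at h1
    subst h1
    exact cls_eq_iff_requiv.2 (.node l (lequiv_of_chM_eq cs cs' h2))

end PreRTM

namespace RTM

open PreRTM

/-- number of vertices -/
def v : RTM → ℕ := Quot.lift PreRTM.vcount (fun _ _ h => (requiv_invar h).1)
/-- number of self-loops -/
def s : RTM → ℕ := Quot.lift PreRTM.scount (fun _ _ h => (requiv_invar h).2.1)
/-- number of multiple edges -/
def e : RTM → ℕ := Quot.lift PreRTM.ecount (fun _ _ h => (requiv_invar h).2.2.1)
/-- root self-loop count -/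
def lp : RTM → ℕ := Quot.lift PreRTM.loops (fun _ _ h => (requiv_invar h).2.2.2.1)
/-- children multiset -/
def ch : RTM → Multiset (ℕ × RTM) := Quot.lift PreRTM.chM (fun _ _ h => (requiv_invar h).2.2.2.2)

@[simp] theorem v_cls (P : PreRTM) : v (cls P) = P.vcount := rfl
@[simp] theorem s_cls (P : PreRTM) : s (cls P) = P.scount := rfl
@[simp] theorem e_cls (P : PreRTM) : e (cls P) = P.ecount := rfl
@[simp] theorem lp_cls (P : PreRTM) : lp (cls P) = P.loops := rfl
@[simp] theorem ch_cls (P : PreRTM) : ch (cls P) = chM P := rfl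

theorem ext_iff (q q' : RTM) : q = q' ↔ (lp q = lp q' ∧ ch q = ch q') := by
  refine Quot.induction_on₂ q q' (fun P Q => ?_)
  constructor
  · intro h; rw [h]; exact ⟨rfl, rfl⟩
  · intro h; exact PreRTM.cls_eq_iff.2 h

theorem exists_rep_list (M : Multiset (ℕ × RTM)) :
    ∃ cs : List (ℕ × PreRTM),
      ((cs.map (fun c => (c.1, cls c.2)) : List (ℕ × RTM)) : Multiset (ℕ × RTM)) = M := by
  induction M using Multiset.induction with
  | empty => exact ⟨[], rfl⟩
  | cons a M ih =>
    obtain ⟨cs, hcs⟩ := ih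
    obtain ⟨e, q⟩ := a
    obtain ⟨P, hP⟩ := Quot.exists_rep q
    exact ⟨(e, P) :: cs, by rw [List.map_cons, ← Multiset.cons_coe, hcs]; simp [cls, hP]⟩

/-- build an `RTM` from a root loop count and a multiset of children -/
noncomputable def node (l : ℕ) (M : Multiset (ℕ × RTM)) : RTM :=
  cls (.node l (exists_rep_list M).choose)

@[simp] theorem lp_node (l : ℕ) (M : Multiset (ℕ × RTM)) : lp (node l M) = l := rfl

@[simp] theorem ch_node (l : ℕ) (M : Multiset (ℕ × RTM)) : ch (node l M) = M := by
  have := (exists_rep_list M).choose_spec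
  simpa [node, chM, children] using this

@[simp] theorem node_lp_ch (q : RTM) : node (lp q) (ch q) = q := by
  rw [ext_iff]; simp

end RTM
namespace PreRTM

theorem sup_coe_eq_foldr (l : List ℕ) : (↑l : Multiset ℕ).sup = l.foldr max 0 := by
  simp [Multiset.sup, Multiset.coe_fold_r]

theorem maxV_eq (P : PreRTM) :
    maxV P = ((chM P).map (fun c => RTM.v c.2)).sup := by
  rw [maxV, chM]
  rw [Multiset.map_coe, List.map_map, sup_coe_eq_foldr]
  rfl

theorem maxS_eq (P : PreRTM) :
    maxS P = (((chM P).filter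
        (fun c => RTM.v c.2 = P.maxV)).map
      (fun c => RTM.s c.2)).sup := by
  rw [chM]
  rw [show ((P.children.map (fun c => (c.1, cls c.2)) : List (ℕ × RTM)) : Multiset (ℕ × RTM))
      = Multiset.map (fun c => (c.1, cls c.2)) (↑P.children : Multiset (ℕ × PreRTM)) from
    (Multiset.map_coe _ _).symm]
  rw [Multiset.filter_map, Multiset.map_map]
  rw [Multiset.filter_coe, Multiset.map_coe, sup_coe_eq_foldr]
  rw [maxS]
  congr 2

theorem maxM_eq (P : PreRTM) :
    maxM P = (((chM P).filter
        (fun c => RTM.v c.2 = P.maxV)).map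
      (fun c => RTM.e c.2)).sup := by
  rw [chM]
  rw [show ((P.children.map (fun c => (c.1, cls c.2)) : List (ℕ × RTM)) : Multiset (ℕ × RTM))
      = Multiset.map (fun c => (c.1, cls c.2)) (↑P.children : Multiset (ℕ × PreRTM)) from
    (Multiset.map_coe _ _).symm]
  rw [Multiset.filter_map, Multiset.map_map]
  rw [Multiset.filter_coe, Multiset.map_coe, sup_coe_eq_foldr]
  rw [maxM]
  congr 2

theorem maxL_eq (P : PreRTM) :
    maxL P = (((chM P).filter
        (fun c => RTM.v c.2 = P.maxV ∧ RTM.e c.2 = P.maxM)).map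
      (fun c => c.1)).sup := by
  rw [chM]
  rw [show ((P.children.map (fun c => (c.1, cls c.2)) : List (ℕ × RTM)) : Multiset (ℕ × RTM))
      = Multiset.map (fun c => (c.1, cls c.2)) (↑P.children : Multiset (ℕ × PreRTM)) from
    (Multiset.map_coe _ _).symm]
  rw [Multiset.filter_map, Multiset.map_map]
  rw [Multiset.filter_coe, Multiset.map_coe, sup_coe_eq_foldr]
  rw [maxL]
  congr 2
  apply List.filter_congr
  intro c _
  show (c.2.vcount == P.maxV && c.2.ecount == P.maxM)
      = decide (c.2.vcount = P.maxV ∧ c.2.ecount = P.maxM)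
  rw [Bool.decide_and]
  congr 1

theorem maxV_invar {P Q : PreRTM} (h : REquiv P Q) : maxV P = maxV Q := by
  rw [maxV_eq, maxV_eq, (requiv_invar h).2.2.2.2]

theorem maxM_invar {P Q : PreRTM} (h : REquiv P Q) : maxM P = maxM Q := by
  rw [maxM_eq, maxM_eq, (requiv_invar h).2.2.2.2, maxV_invar h]

theorem maxS_invar {P Q : PreRTM} (h : REquiv P Q) : maxS P = maxS Q := by
  rw [maxS_eq, maxS_eq, (requiv_invar h).2.2.2.2, maxV_invar h]

theorem maxL_invar {P Q : PreRTM} (h : REquiv P Q) : maxL P = maxL Q := by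
  rw [maxL_eq, maxL_eq, (requiv_invar h).2.2.2.2, maxM_invar h, maxV_invar h]

end PreRTM

namespace RTM

open PreRTM

/-- Max_v -/
def mv : RTM → ℕ := Quot.lift PreRTM.maxV (fun _ _ h => maxV_invar h)
/-- Max_s -/
def ms : RTM → ℕ := Quot.lift PreRTM.maxS (fun _ _ h => maxS_invar h)
/-- Max_m -/
def mm : RTM → ℕ := Quot.lift PreRTM.maxM (fun _ _ h => maxM_invar h)
/-- Max_l -/
def ml : RTM → ℕ := Quot.lift PreRTM.maxL (fun _ _ h => maxL_invar h)

@[simp] theorem mv_cls (P : PreRTM) : mv (cls P) = P.maxV := rfl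
@[simp] theorem ms_cls (P : PreRTM) : ms (cls P) = P.maxS := rfl
@[simp] theorem mm_cls (P : PreRTM) : mm (cls P) = P.maxM := rfl
@[simp] theorem ml_cls (P : PreRTM) : ml (cls P) = P.maxL := rfl

theorem v_eq (q : RTM) : v q = 1 + ((ch q).map (fun c => v c.2)).sum := by
  refine Quot.inductionOn q (fun P => ?_)
  obtain ⟨l, cs⟩ := P
  show vcount (.node l cs) = _
  rw [vcount_node]
  congr 1
  show _ = (Multiset.map _ (chM (.node l cs))).sum
  rw [chM, children, Multiset.map_coe, List.map_map, Multiset.sum_coe]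
  rfl

theorem s_eq (q : RTM) : s q = lp q + ((ch q).map (fun c => s c.2)).sum := by
  refine Quot.inductionOn q (fun P => ?_)
  obtain ⟨l, cs⟩ := P
  show scount (.node l cs) = _
  rw [scount_node]
  congr 1
  show _ = (Multiset.map _ (chM (.node l cs))).sum
  rw [chM, children, Multiset.map_coe, List.map_map, Multiset.sum_coe]
  rfl

theorem e_eq (q : RTM) : e q = ((ch q).map (fun c => c.1 + e c.2)).sum := by
  refine Quot.inductionOn q (fun P => ?_)
  obtain ⟨l, cs⟩ := P
  show ecount (.node l cs) = _
  rw [ecount_node]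
  show _ = (Multiset.map _ (chM (.node l cs))).sum
  rw [chM, children, Multiset.map_coe, List.map_map, Multiset.sum_coe]
  rfl

theorem mv_eq (q : RTM) : mv q = ((ch q).map (fun c => v c.2)).sup := by
  refine Quot.inductionOn q (fun P => ?_)
  exact maxV_eq P

theorem ms_eq (q : RTM) :
    ms q = (((ch q).filter (fun c => v c.2 = mv q)).map (fun c => s c.2)).sup := by
  refine Quot.inductionOn q (fun P => ?_)
  exact maxS_eq P

theorem mm_eq (q : RTM) :
    mm q = (((ch q).filter (fun c => v c.2 = mv q)).map (fun c => e c.2)).sup := by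
  refine Quot.inductionOn q (fun P => ?_)
  exact maxM_eq P

theorem ml_eq (q : RTM) :
    ml q = (((ch q).filter (fun c => v c.2 = mv q ∧ e c.2 = mm q)).map (fun c => c.1)).sup := by
  refine Quot.inductionOn q (fun P => ?_)
  exact maxL_eq P

end RTM
theorem Multiset.sup_mem_of_ne_zero {M : Multiset ℕ} (h : M.sup ≠ 0) : M.sup ∈ M := by
  induction M using Multiset.induction with
  | empty => simp at h
  | cons a s ih =>
    rw [Multiset.sup_cons] at h ⊢
    rcases le_total a s.sup with hle | hle
    · rw [sup_of_le_right hle] at h ⊢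
      exact Multiset.mem_cons_of_mem (ih h)
    · rw [sup_of_le_left hle]
      exact Multiset.mem_cons_self _ _

namespace RTM

open PreRTM

theorem v_pos (q : RTM) : 1 ≤ v q := by rw [v_eq]; omega

theorem mem_ch_v {q : RTM} {c : ℕ × RTM} (h : c ∈ ch q) : v c.2 + 1 ≤ v q := by
  have h2 : v c.2 ≤ ((ch q).map (fun c => v c.2)).sum :=
    Multiset.le_sum_of_mem (Multiset.mem_map_of_mem (fun c => v c.2) h)
  rw [v_eq q]; omega

theorem mem_ch_s {q : RTM} {c : ℕ × RTM} (h : c ∈ ch q) : s c.2 ≤ s q := by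
  have h2 : s c.2 ≤ ((ch q).map (fun c => s c.2)).sum :=
    Multiset.le_sum_of_mem (Multiset.mem_map_of_mem (fun c => s c.2) h)
  rw [s_eq q]; omega

theorem mem_ch_e {q : RTM} {c : ℕ × RTM} (h : c ∈ ch q) : c.1 + e c.2 ≤ e q := by
  have h2 : c.1 + e c.2 ≤ ((ch q).map (fun c => c.1 + e c.2)).sum :=
    Multiset.le_sum_of_mem (Multiset.mem_map_of_mem (fun c => c.1 + e c.2) h)
  rw [e_eq q]; omega

theorem card_ch_le (q : RTM) : Multiset.card (ch q) + 1 ≤ v q := by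
  have h2 : Multiset.card (ch q) • 1 ≤ ((ch q).map (fun c => v c.2)).sum := by
    rw [show Multiset.card (ch q) = Multiset.card ((ch q).map (fun c => v c.2)) by simp]
    exact Multiset.card_nsmul_le_sum (fun x hx => by
      obtain ⟨c, _, rfl⟩ := Multiset.mem_map.1 hx
      exact v_pos c.2)
  simp only [smul_eq_mul, mul_one] at h2
  rw [v_eq q]; omega

theorem mv_le (q : RTM) : mv q + 1 ≤ v q ∨ mv q = 0 := by
  rcases eq_or_ne (mv q) 0 with h | h
  · exact Or.inr h
  · left
    rw [mv_eq] at h ⊢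
    have hmem : ((ch q).map (fun c => v c.2)).sup ∈ (ch q).map (fun c => v c.2) := by
      apply Multiset.sup_mem_of_ne_zero
      intro h0
      rw [h0] at h; simp at h
    obtain ⟨c, hc, hce⟩ := Multiset.mem_map.1 hmem
    rw [← hce]
    exact mem_ch_v hc

theorem ms_le (q : RTM) : ms q ≤ s q := by
  rw [ms_eq]
  apply Multiset.sup_le.2
  intro b hb
  obtain ⟨c, hc, rfl⟩ := Multiset.mem_map.1 hb
  exact mem_ch_s (Multiset.mem_of_mem_filter hc)

theorem mm_le (q : RTM) : mm q ≤ e q := by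
  rw [mm_eq]
  apply Multiset.sup_le.2
  intro b hb
  obtain ⟨c, hc, rfl⟩ := Multiset.mem_map.1 hb
  have := mem_ch_e (Multiset.mem_of_mem_filter hc)
  omega

theorem ml_le (q : RTM) : ml q ≤ e q := by
  rw [ml_eq]
  apply Multiset.sup_le.2
  intro b hb
  obtain ⟨c, hc, rfl⟩ := Multiset.mem_map.1 hb
  have := mem_ch_e (Multiset.mem_of_mem_filter hc)
  omega

end RTM
theorem mem_famLLLL_iff {n s m f g h k : ℤ} {q : RTM} :
    q ∈ famLLLL n s m f g h k ↔
      ((RTM.v q : ℤ) = n ∧ (RTM.s q : ℤ) = s ∧ (RTM.e q : ℤ) = m ∧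
        (RTM.mv q : ℤ) ≤ f ∧ (RTM.ms q : ℤ) ≤ g ∧ (RTM.mm q : ℤ) ≤ h ∧ (RTM.ml q : ℤ) ≤ k) := by
  constructor
  · rintro ⟨P, hP, rfl⟩
    obtain ⟨⟨h1, h2, h3⟩, h4, h5, h6, h7⟩ := hP
    exact ⟨h1, h2, h3, h4, h5, h6, h7⟩
  · rintro ⟨h1, h2, h3, h4, h5, h6, h7⟩
    obtain ⟨P, rfl⟩ := Quot.exists_rep q
    exact ⟨P, ⟨⟨h1, h2, h3⟩, h4, h5, h6, h7⟩, rfl⟩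

theorem mem_famEEEE_iff {n s m f g h k : ℤ} {q : RTM} :
    q ∈ famEEEE n s m f g h k ↔
      ((RTM.v q : ℤ) = n ∧ (RTM.s q : ℤ) = s ∧ (RTM.e q : ℤ) = m ∧
        (RTM.mv q : ℤ) = f ∧ (RTM.ms q : ℤ) = g ∧ (RTM.mm q : ℤ) = h ∧ (RTM.ml q : ℤ) = k) := by
  constructor
  · rintro ⟨P, hP, rfl⟩
    obtain ⟨⟨⟨⟨⟨⟨h1, h2, h3⟩, _, _, _, _⟩, h4⟩, h5⟩, h6⟩, h7⟩ := hP
    exact ⟨h1, h2, h3, h4, h5, h6, h7⟩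
  · rintro ⟨h1, h2, h3, h4, h5, h6, h7⟩
    obtain ⟨P, rfl⟩ := Quot.exists_rep q
    exact ⟨P, ⟨⟨⟨⟨⟨⟨h1, h2, h3⟩, le_of_eq h4, le_of_eq h5, le_of_eq h6, le_of_eq h7⟩, h4⟩,
      h5⟩, h6⟩, h7⟩, rfl⟩

theorem finite_lists {α : Type*} {T : Set α} (hT : T.Finite) (k : ℕ) :
    {L : List α | L.length ≤ k ∧ ∀ x ∈ L, x ∈ T}.Finite := by
  induction k with
  | zero =>
    apply Set.Finite.subset (Set.finite_singleton ([] : List α))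
    rintro L ⟨h1, _⟩
    simp only [Nat.le_zero] at h1
    simp [List.eq_nil_of_length_eq_zero h1]
  | succ k ih =>
    apply Set.Finite.subset ((Set.finite_singleton ([] : List α)).union
      (Set.Finite.image2 (fun a l => a :: l) hT ih))
    rintro L ⟨h1, h2⟩
    cases L with
    | nil => exact Or.inl rfl
    | cons a t =>
      right
      refine Set.mem_image2_of_mem (h2 a (by simp)) ⟨?_, ?_⟩
      · simpa using h1
      · exact fun x hx => h2 x (List.mem_cons_of_mem _ hx)

theorem finite_multisets {α : Type*} {T : Set α} (hT : T.Finite) (k : ℕ) :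
    {M : Multiset α | Multiset.card M ≤ k ∧ ∀ x ∈ M, x ∈ T}.Finite := by
  apply Set.Finite.subset ((finite_lists hT k).image (fun L : List α => (↑L : Multiset α)))
  rintro M ⟨h1, h2⟩
  refine ⟨M.toList, ⟨?_, ?_⟩, by simp⟩
  · simpa using h1
  · intro x hx
    exact h2 x (by rwa [← Multiset.mem_toList])

theorem finite_rtm (nn ss mm : ℕ) :
    {q : RTM | RTM.v q ≤ nn ∧ RTM.s q ≤ ss ∧ RTM.e q ≤ mm}.Finite := by
  induction nn with
  | zero =>
    apply Set.Finite.subset (Set.finite_empty)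
    rintro q ⟨h1, _⟩
    have := RTM.v_pos q
    omega
  | succ n ih =>
    apply Set.Finite.subset (Set.Finite.image (fun p : ℕ × Multiset (ℕ × RTM) => RTM.node p.1 p.2)
      ((Set.finite_Iic ss).prod (finite_multisets
        (Set.Finite.prod (Set.finite_Iic mm)
          (ih.subset (fun q hq => hq))) n)))
    rintro q ⟨h1, h2, h3⟩
    refine ⟨(RTM.lp q, RTM.ch q), ⟨?_, ?_, ?_⟩, by simp⟩
    · have : RTM.lp q ≤ RTM.s q := by rw [RTM.s_eq q]; omega
      simpa using le_trans this h2
    · have := RTM.card_ch_le q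
      simp only [Set.mem_setOf_eq]
      omega
    · intro c hc
      have hv := RTM.mem_ch_v hc
      have hs := RTM.mem_ch_s hc
      have he := RTM.mem_ch_e hc
      exact ⟨by simp only [Set.mem_Iic]; omega, by refine ⟨?_, ?_, ?_⟩ <;> omega⟩

theorem famLLLL_finite (n s m f g h k : ℤ) : (famLLLL n s m f g h k).Finite := by
  apply Set.Finite.subset (finite_rtm n.toNat s.toNat m.toNat)
  intro q hq
  rw [mem_famLLLL_iff] at hq
  refine ⟨?_, ?_, ?_⟩ <;> omega

theorem famEEEE_finite (n s m f g h k : ℤ) : (famEEEE n s m f g h k).Finite := by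
  apply Set.Finite.subset (finite_rtm n.toNat s.toNat m.toNat)
  intro q hq
  rw [mem_famEEEE_iff] at hq
  refine ⟨?_, ?_, ?_⟩ <;> omega
theorem card_multisets {α : Type*} (A : Set α) (hA : A.Finite) (z : ℕ) :
    ({M : Multiset α | Multiset.card M = z ∧ ∀ x ∈ M, x ∈ A}).ncard =
      Nat.multichoose (A.ncard) z := by
  classical
  haveI := hA.fintype
  have E : {M : Multiset α // Multiset.card M = z ∧ ∀ x ∈ M, x ∈ A} ≃ Sym (↥A) z :=
    { toFun := fun M => ⟨M.1.attach.map (fun x => (⟨x.1, M.2.2 x.1 x.2⟩ : ↥A)), by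
        simp [M.2.1]⟩
      invFun := fun N => ⟨N.1.map Subtype.val, by
        refine ⟨by simp [N.2], fun x hx => ?_⟩
        obtain ⟨a, _, rfl⟩ := Multiset.mem_map.1 hx
        exact a.2⟩
      left_inv := fun M => by
        apply Subtype.ext
        show (M.1.attach.map _).map Subtype.val = M.1
        rw [Multiset.map_map]
        exact Multiset.attach_map_val M.1
      right_inv := fun N => by
        apply Subtype.ext
        apply Multiset.map_injective Subtype.val_injective
        show ((N.1.map Subtype.val).attach.map _).map Subtype.val = _
        rw [Multiset.map_map]
        exact Multiset.attach_map_val _ }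
  have h1 : ({M : Multiset α | Multiset.card M = z ∧ ∀ x ∈ M, x ∈ A}).ncard =
      Nat.card {M : Multiset α // Multiset.card M = z ∧ ∀ x ∈ M, x ∈ A} := by
    rw [← Nat.card_coe_set_eq]
    rfl
  rw [h1, Nat.card_congr E, Nat.card_eq_fintype_card, Sym.card_sym_eq_multichoose]
  congr 1
  rw [Set.ncard_eq_toFinset_card']
  simp [Set.toFinset_card]
open RTM in
theorem forward_facts {n s m f : ℤ} (hf : 1 ≤ f) {q : RTM}
    (hq : q ∈ famEEEE n s m f 0 0 0) :
    (∀ c ∈ (ch q).filter (fun c => (v c.2 : ℤ) = f),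
        c.1 = 0 ∧ c.2 ∈ famLLLL f 0 0 (f - 1) 0 0 0) ∧
    1 ≤ Multiset.card ((ch q).filter (fun c => (v c.2 : ℤ) = f)) ∧
    (Multiset.card ((ch q).filter (fun c => (v c.2 : ℤ) = f)) : ℤ) * f ≤ n - 1 ∧
    node (lp q) ((ch q).filter (fun c => ¬ (v c.2 : ℤ) = f)) ∈
      famLLLL (n - (Multiset.card ((ch q).filter (fun c => (v c.2 : ℤ) = f)) : ℤ) * f) s m
        (min (n - (Multiset.card ((ch q).filter (fun c => (v c.2 : ℤ) = f)) : ℤ) * f - 1) (f - 1))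
        s m m := by
  classical
  obtain ⟨hv, hs, he, hmv, hms, hmm, hml⟩ := mem_famEEEE_iff.1 hq
  have hms0 : ms q = 0 := by exact_mod_cast hms
  have hmm0 : mm q = 0 := by exact_mod_cast hmm
  have hml0 : ml q = 0 := by exact_mod_cast hml
  set p : ℕ × RTM → Prop := fun c => (v c.2 : ℤ) = f with hp
  set big := (ch q).filter p with hbigdef
  set small := (ch q).filter (fun c => ¬ p c) with hsmalldef
  have hsplit : big + small = ch q := Multiset.filter_add_not p (ch q)
  have hpmv : ∀ c ∈ ch q, (p c ↔ v c.2 = mv q) := by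
    intro c _
    constructor
    · intro hpc
      have h2 : (v c.2 : ℤ) = (mv q : ℤ) := by rw [hpc, hmv]
      exact_mod_cast h2
    · intro h2
      show (v c.2 : ℤ) = f
      rw [h2, hmv]
  have hbig_eq : big = (ch q).filter (fun c => v c.2 = mv q) := Multiset.filter_congr hpmv
  have hbig_mem : ∀ c ∈ big, v c.2 = mv q ∧ RTM.s c.2 = 0 ∧ RTM.e c.2 = 0 ∧ c.1 = 0 := by
    intro c hc
    have hcch : c ∈ ch q := Multiset.mem_of_mem_filter hc
    have hcp : p c := Multiset.of_mem_filter hc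
    have hcv : v c.2 = mv q := (hpmv c hcch).1 hcp
    have hs0 : RTM.s c.2 = 0 := by
      have hle : RTM.s c.2 ≤ ms q := by
        rw [ms_eq]
        exact Multiset.le_sup (Multiset.mem_map_of_mem _ (Multiset.mem_filter.2 ⟨hcch, hcv⟩))
      omega
    have he0 : RTM.e c.2 = 0 := by
      have hle : RTM.e c.2 ≤ mm q := by
        rw [mm_eq]
        exact Multiset.le_sup (Multiset.mem_map_of_mem _ (Multiset.mem_filter.2 ⟨hcch, hcv⟩))
      omega
    have hc1 : c.1 = 0 := by
      have hle : c.1 ≤ ml q := by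
        rw [ml_eq]
        exact Multiset.le_sup (Multiset.mem_map_of_mem _
          (Multiset.mem_filter.2 ⟨hcch, ⟨hcv, by rw [he0, hmm0]⟩⟩))
      omega
    exact ⟨hcv, hs0, he0, hc1⟩
  have hbigA : ∀ c ∈ big, c.1 = 0 ∧ c.2 ∈ famLLLL f 0 0 (f - 1) 0 0 0 := by
    intro c hc
    obtain ⟨hcv, hs0, he0, hc1⟩ := hbig_mem c hc
    have hvcf : (v c.2 : ℤ) = f := by rw [hcv]; exact hmv
    refine ⟨hc1, mem_famLLLL_iff.2 ⟨hvcf, by simp [hs0], by simp [he0], ?_, ?_, ?_, ?_⟩⟩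
    · rcases mv_le c.2 with h | h
      · omega
      · rw [h]; omega
    · have := ms_le c.2; omega
    · have := mm_le c.2; omega
    · have := ml_le c.2; omega
  have hcard1 : 1 ≤ Multiset.card big := by
    have hff : ((ch q).map (fun c => v c.2)).sup ≠ 0 := by
      rw [← mv_eq]; omega
    have hmem := Multiset.sup_mem_of_ne_zero hff
    obtain ⟨c, hc, hcv⟩ := Multiset.mem_map.1 hmem
    have hcb : c ∈ big := by
      rw [hbig_eq]
      exact Multiset.mem_filter.2 ⟨hc, by rw [hcv, ← mv_eq]⟩
    have := Multiset.card_pos_iff_exists_mem.2 ⟨c, hcb⟩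
    omega
  -- sums
  have hsum_big_v : (big.map (fun c => v c.2)).sum = Multiset.card big * mv q := by
    rw [show big.map (fun c => v c.2) = Multiset.replicate (Multiset.card big) (mv q) from
      Multiset.eq_replicate.2 ⟨by simp, fun b hb => by
        obtain ⟨c, hc, rfl⟩ := Multiset.mem_map.1 hb; exact (hbig_mem c hc).1⟩]
    simp [Multiset.sum_replicate]
  have hsum_big_s : (big.map (fun c => RTM.s c.2)).sum = 0 := by
    apply Multiset.sum_eq_zero
    intro x hx
    obtain ⟨c, hc, rfl⟩ := Multiset.mem_map.1 hx
    exact (hbig_mem c hc).2.1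
  have hsum_big_e : (big.map (fun c => c.1 + RTM.e c.2)).sum = 0 := by
    apply Multiset.sum_eq_zero
    intro x hx
    obtain ⟨c, hc, rfl⟩ := Multiset.mem_map.1 hx
    obtain ⟨_, _, he0, hc1⟩ := hbig_mem c hc
    omega
  have hv_split : v q = 1 + (big.map (fun c => v c.2)).sum + (small.map (fun c => v c.2)).sum := by
    have h := v_eq q
    rw [← hsplit, Multiset.map_add, Multiset.sum_add] at h
    omega
  have hs_split : RTM.s q = lp q + (big.map (fun c => RTM.s c.2)).sum
      + (small.map (fun c => RTM.s c.2)).sum := by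
    have h := s_eq q
    rw [← hsplit, Multiset.map_add, Multiset.sum_add] at h
    omega
  have he_split : RTM.e q = (big.map (fun c => c.1 + RTM.e c.2)).sum
      + (small.map (fun c => c.1 + RTM.e c.2)).sum := by
    have h := e_eq q
    rw [← hsplit, Multiset.map_add, Multiset.sum_add] at h
    omega
  set r := node (lp q) small with hrdef
  have hchr : ch r = small := ch_node _ _
  have hlpr : lp r = lp q := lp_node _ _
  have hvr : v r = 1 + (small.map (fun c => v c.2)).sum := by rw [v_eq r, hchr]
  have hsr : RTM.s r = lp q + (small.map (fun c => RTM.s c.2)).sum := by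
    rw [s_eq r, hchr, hlpr]
  have her : RTM.e r = (small.map (fun c => c.1 + RTM.e c.2)).sum := by rw [e_eq r, hchr]
  -- integer versions
  have hvrZ : (v r : ℤ) = n - (Multiset.card big : ℤ) * f := by
    have h1 : ((Multiset.card big * mv q : ℕ) : ℤ) = (Multiset.card big : ℤ) * f := by
      push_cast
      rw [hmv]
    have h2 : (v q : ℤ) = 1 + (Multiset.card big : ℤ) * f
        + ((small.map (fun c => v c.2)).sum : ℤ) := by
      have h4 := hv_split
      rw [hsum_big_v] at h4
      rw [← h1]
      exact_mod_cast h4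
    have h3 : (v r : ℤ) = 1 + ((small.map (fun c => v c.2)).sum : ℤ) := by
      exact_mod_cast hvr
    rw [h3]
    linarith [hv, h2]
  have hsrZ : (RTM.s r : ℤ) = s := by
    rw [hsum_big_s] at hs_split
    have : RTM.s r = RTM.s q := by omega
    rw [this]; exact hs
  have herZ : (RTM.e r : ℤ) = m := by
    rw [hsum_big_e] at he_split
    have : RTM.e r = RTM.e q := by omega
    rw [this]; exact he
  have hyf : (Multiset.card big : ℤ) * f ≤ n - 1 := by
    have := v_pos r
    omega
  -- maxV of r
  have hmvr : (mv r : ℤ) ≤ f - 1 := by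
    have hsup : mv r ≤ mv q - 1 := by
      rw [mv_eq r, hchr]
      apply Multiset.sup_le.2
      intro b hb
      obtain ⟨c, hc, rfl⟩ := Multiset.mem_map.1 hb
      have hcch : c ∈ ch q := Multiset.mem_of_mem_filter hc
      have hcnp : ¬ p c := (Multiset.mem_filter.1 hc).2
      have hle : v c.2 ≤ mv q := by
        rw [mv_eq]
        exact Multiset.le_sup (Multiset.mem_map_of_mem _ hcch)
      have hne : v c.2 ≠ mv q := fun hcv => hcnp ((hpmv c hcch).2 hcv)
      omega
    omega
  refine ⟨hbigA, hcard1, hyf, mem_famLLLL_iff.2 ⟨hvrZ, hsrZ, herZ, ?_, ?_, ?_, ?_⟩⟩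
  · refine le_min ?_ hmvr
    rcases mv_le r with h | h
    · omega
    · omega
  · have := ms_le r; omega
  · have := mm_le r; omega
  · have := ml_le r; omega
open RTM in
theorem backward_facts {n s m f y : ℤ} (hf : 1 ≤ f) (hy1 : 1 ≤ y)
    {M : Multiset RTM} (hMA : ∀ x ∈ M, x ∈ famLLLL f 0 0 (f - 1) 0 0 0)
    (hMc : (Multiset.card M : ℤ) = y)
    {r : RTM} (hr : r ∈ famLLLL (n - y * f) s m (min (n - y * f - 1) (f - 1)) s m m) :
    node (lp r) (M.map (fun a => (0, a)) + ch r) ∈ famEEEE n s m f 0 0 0 ∧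
    (ch (node (lp r) (M.map (fun a => (0, a)) + ch r))).filter (fun c => (v c.2 : ℤ) = f)
      = M.map (fun a => (0, a)) ∧
    (ch (node (lp r) (M.map (fun a => (0, a)) + ch r))).filter (fun c => ¬ (v c.2 : ℤ) = f)
      = ch r := by
  classical
  obtain ⟨hvr, hsr, her, hmvr, hmsr, hmmr, hmlr⟩ := mem_famLLLL_iff.1 hr
  have hmvrf : (mv r : ℤ) ≤ f - 1 := le_trans hmvr (min_le_right _ _)
  set p : ℕ × RTM → Prop := fun c => (v c.2 : ℤ) = f with hp
  set q' := node (lp r) (M.map (fun a => (0, a)) + ch r) with hq'def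
  have hch : ch q' = M.map (fun a => (0, a)) + ch r := ch_node _ _
  have hlp : lp q' = lp r := lp_node _ _
  -- facts about M elements
  have hMfacts : ∀ x ∈ M, v x = f.toNat ∧ RTM.s x = 0 ∧ RTM.e x = 0 ∧ (v x : ℤ) = f := by
    intro x hx
    obtain ⟨h1, h2, h3, _, _, _, _⟩ := mem_famLLLL_iff.1 (hMA x hx)
    refine ⟨?_, by exact_mod_cast h2, by exact_mod_cast h3, h1⟩
    omega
  -- facts about children of r
  have hrfacts : ∀ c ∈ ch r, ¬ p c ∧ v c.2 < f.toNat := by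
    intro c hc
    have hle : v c.2 ≤ mv r := by
      rw [mv_eq]
      exact Multiset.le_sup (Multiset.mem_map_of_mem _ hc)
    constructor
    · show ¬ (v c.2 : ℤ) = f
      omega
    · omega
  -- filter equalities
  have hfilter1 : (ch q').filter p = M.map (fun a => (0, a)) := by
    rw [hch, Multiset.filter_add]
    rw [Multiset.filter_eq_self.2 (fun c hc => by
      obtain ⟨x, hx, rfl⟩ := Multiset.mem_map.1 hc
      exact (hMfacts x hx).2.2.2)]
    rw [Multiset.filter_eq_nil.2 (fun c hc => (hrfacts c hc).1)]
    simp
  have hfilter2 : (ch q').filter (fun c => ¬ p c) = ch r := by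
    rw [hch, Multiset.filter_add]
    rw [Multiset.filter_eq_nil.2 (fun c hc => by
      obtain ⟨x, hx, rfl⟩ := Multiset.mem_map.1 hc
      exact not_not_intro (hMfacts x hx).2.2.2)]
    rw [Multiset.filter_eq_self.2 (fun c hc => (hrfacts c hc).1)]
    simp
  -- M nonempty
  have hMne : ∃ x, x ∈ M := by
    apply Multiset.card_pos_iff_exists_mem.1
    omega
  -- mv q' = f.toNat
  have hmapM : (M.map (fun a => ((0 : ℕ), a))).map (fun c => v c.2) = M.map (fun x => v x) := by
    rw [Multiset.map_map]
    rfl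
  have hsupM : ((M.map (fun a => ((0 : ℕ), a))).map (fun c => v c.2)).sup = f.toNat := by
    rw [hmapM]
    apply le_antisymm
    · apply Multiset.sup_le.2
      intro b hb
      obtain ⟨x, hx, rfl⟩ := Multiset.mem_map.1 hb
      exact le_of_eq (hMfacts x hx).1
    · obtain ⟨x, hx⟩ := hMne
      have := (hMfacts x hx).1
      rw [← this]
      exact Multiset.le_sup (Multiset.mem_map_of_mem _ hx)
  have hmv : mv q' = f.toNat := by
    rw [mv_eq, hch, Multiset.map_add, Multiset.sup_add, hsupM]
    have h2 : ((ch r).map (fun c => v c.2)).sup = mv r := (mv_eq r).symm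
    rw [h2]
    have : mv r ≤ f.toNat := by omega
    exact sup_eq_left.2 this
  have hmvZ : (mv q' : ℤ) = f := by rw [hmv]; omega
  -- sums
  have hsumMv : ((M.map (fun a => ((0 : ℕ), a))).map (fun c => v c.2)).sum
      = Multiset.card M * f.toNat := by
    rw [hmapM]
    rw [show M.map (fun x => v x) = Multiset.replicate (Multiset.card M) f.toNat from
      Multiset.eq_replicate.2 ⟨by simp, fun b hb => by
        obtain ⟨x, hx, rfl⟩ := Multiset.mem_map.1 hb; exact (hMfacts x hx).1⟩]
    simp [Multiset.sum_replicate]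
  have hvq' : (v q' : ℤ) = n := by
    have h1 : v q' = 1 + (Multiset.card M * f.toNat + ((ch r).map (fun c => v c.2)).sum) := by
      rw [v_eq q', hch, Multiset.map_add, Multiset.sum_add, hsumMv]
    have h2 : v r = 1 + ((ch r).map (fun c => v c.2)).sum := v_eq r
    have h3 : ((Multiset.card M * f.toNat : ℕ) : ℤ) = y * f := by
      push_cast
      rw [hMc]
      congr 1
      omega
    have h4 : (v q' : ℤ) = 1 + (((Multiset.card M * f.toNat : ℕ) : ℤ)
        + (((ch r).map (fun c => v c.2)).sum : ℤ)) := by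
      exact_mod_cast congrArg (Nat.cast (R := ℤ)) h1
    rw [h3] at h4
    have h5 : (v r : ℤ) = 1 + (((ch r).map (fun c => v c.2)).sum : ℤ) := by
      exact_mod_cast congrArg (Nat.cast (R := ℤ)) h2
    omega
  have hsq' : (RTM.s q' : ℤ) = s := by
    have h1 : RTM.s q' = lp r + (((M.map (fun a => ((0 : ℕ), a))).map (fun c => RTM.s c.2)).sum
        + ((ch r).map (fun c => RTM.s c.2)).sum) := by
      rw [s_eq q', hch, hlp, Multiset.map_add, Multiset.sum_add]
    have h2 : ((M.map (fun a => ((0 : ℕ), a))).map (fun c => RTM.s c.2)).sum = 0 := by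
      apply Multiset.sum_eq_zero
      intro b hb
      obtain ⟨c, hc, rfl⟩ := Multiset.mem_map.1 hb
      obtain ⟨x, hx, rfl⟩ := Multiset.mem_map.1 hc
      exact (hMfacts x hx).2.1
    rw [h2] at h1
    have h3 : RTM.s r = lp r + ((ch r).map (fun c => RTM.s c.2)).sum := s_eq r
    have : RTM.s q' = RTM.s r := by omega
    rw [this]; exact hsr
  have heq' : (RTM.e q' : ℤ) = m := by
    have h1 : RTM.e q' = ((M.map (fun a => ((0 : ℕ), a))).map (fun c => c.1 + RTM.e c.2)).sum
        + ((ch r).map (fun c => c.1 + RTM.e c.2)).sum := by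
      rw [e_eq q', hch, Multiset.map_add, Multiset.sum_add]
    have h2 : ((M.map (fun a => ((0 : ℕ), a))).map (fun c => c.1 + RTM.e c.2)).sum = 0 := by
      apply Multiset.sum_eq_zero
      intro b hb
      obtain ⟨c, hc, rfl⟩ := Multiset.mem_map.1 hb
      obtain ⟨x, hx, rfl⟩ := Multiset.mem_map.1 hc
      have := (hMfacts x hx).2.2.1
      simp [this]
    rw [h2] at h1
    have h3 : RTM.e r = ((ch r).map (fun c => c.1 + RTM.e c.2)).sum := e_eq r
    have : RTM.e q' = RTM.e r := by omega
    rw [this]; exact her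
  -- ms q' = 0
  have hfilter_mv : (ch q').filter (fun c => v c.2 = mv q') = M.map (fun a => ((0 : ℕ), a)) := by
    rw [← hfilter1]
    apply Multiset.filter_congr
    intro c _
    rw [hmv]
    constructor
    · intro h; show (v c.2 : ℤ) = f; omega
    · intro h; show v c.2 = f.toNat; have : (v c.2 : ℤ) = f := h; omega
  have hms : ms q' = 0 := by
    rw [ms_eq, hfilter_mv]
    apply Nat.le_zero.1
    apply Multiset.sup_le.2
    intro b hb
    obtain ⟨c, hc, rfl⟩ := Multiset.mem_map.1 hb
    obtain ⟨x, hx, rfl⟩ := Multiset.mem_map.1 hc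
    exact le_of_eq (hMfacts x hx).2.1
  have hmm : mm q' = 0 := by
    rw [mm_eq, hfilter_mv]
    apply Nat.le_zero.1
    apply Multiset.sup_le.2
    intro b hb
    obtain ⟨c, hc, rfl⟩ := Multiset.mem_map.1 hb
    obtain ⟨x, hx, rfl⟩ := Multiset.mem_map.1 hc
    exact le_of_eq (hMfacts x hx).2.2.1
  have hml : ml q' = 0 := by
    rw [ml_eq]
    have hfilter_ml : (ch q').filter (fun c => v c.2 = mv q' ∧ RTM.e c.2 = mm q')
        = M.map (fun a => ((0 : ℕ), a)) := by
      rw [hch, Multiset.filter_add]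
      rw [Multiset.filter_eq_self.2 (fun c hc => by
        obtain ⟨x, hx, rfl⟩ := Multiset.mem_map.1 hc
        refine ⟨by rw [hmv]; exact (hMfacts x hx).1, by rw [hmm]; exact (hMfacts x hx).2.2.1⟩)]
      rw [Multiset.filter_eq_nil.2 (fun c hc hcon => by
        have h2 := (hrfacts c hc).2
        rw [hmv] at hcon
        omega)]
      simp
    rw [hfilter_ml]
    apply Nat.le_zero.1
    apply Multiset.sup_le.2
    intro b hb
    obtain ⟨c, hc, rfl⟩ := Multiset.mem_map.1 hb
    obtain ⟨x, hx, rfl⟩ := Multiset.mem_map.1 hc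
    rfl
  exact ⟨mem_famEEEE_iff.2 ⟨hvq', hsq', heq', hmvZ, by rw [hms]; rfl, by rw [hmm]; rfl,
    by rw [hml]; rfl⟩, hfilter1, hfilter2⟩

open RTM

/-- Paper's Lemma 2(i): recursion for `p(n,s,m,f=,0=,0=,0=)`. -/
theorem lemma2_i (n s m f : ℤ) (hn : 3 ≤ n) (hf : 1 ≤ f) (hs : 0 ≤ s) (hm : 0 ≤ m) :
    pEEEE n s m f 0 0 0 =
      ∑ y ∈ Yset n s m f 0 0 0,
        w f 0 0 y.toNat *
          pLLLL (n - y*f) s m (min (n - y*f - 1) (f-1)) s m m := by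
  classical
  have hSfin : (famEEEE n s m f 0 0 0).Finite := famEEEE_finite n s m f 0 0 0
  have hY : ∀ q ∈ hSfin.toFinset,
      (Multiset.card ((ch q).filter (fun c => (v c.2 : ℤ) = f)) : ℤ) ∈ Yset n s m f 0 0 0 := by
    intro q hq
    rw [Set.Finite.mem_toFinset] at hq
    obtain ⟨_, hc1, hcf, _⟩ := forward_facts hf hq
    rw [Yset, Finset.mem_filter, Finset.mem_Icc]
    refine ⟨⟨by exact_mod_cast hc1, ?_⟩, ?_, ?_⟩
    · rw [Int.le_ediv_iff_mul_le (by omega)]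
      exact hcf
    · intro hcon; omega
    · intro hcon; omega
  have hp : pEEEE n s m f 0 0 0 = hSfin.toFinset.card := Set.ncard_eq_toFinset_card _ hSfin
  rw [hp, Finset.card_eq_sum_card_fiberwise hY]
  apply Finset.sum_congr rfl
  intro y hy
  rw [Yset, Finset.mem_filter, Finset.mem_Icc] at hy
  obtain ⟨⟨hy1, hy2⟩, -⟩ := hy
  have hyn : y * f ≤ n - 1 := (Int.le_ediv_iff_mul_le (by omega)).1 hy2
  have hzy : (y.toNat : ℤ) = y := Int.toNat_of_nonneg (by omega)
  have hAfin : (famLLLL f 0 0 (f - 1) 0 0 0).Finite := famLLLL_finite _ _ _ _ _ _ _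
  have hBfin : (famLLLL (n - y * f) s m (min (n - y * f - 1) (f - 1)) s m m).Finite :=
    famLLLL_finite _ _ _ _ _ _ _
  have hMBfin : ({M : Multiset RTM | Multiset.card M = y.toNat ∧
      ∀ x ∈ M, x ∈ famLLLL f 0 0 (f - 1) 0 0 0}).Finite :=
    (finite_multisets hAfin y.toNat).subset (by rintro M ⟨h1, h2⟩; exact ⟨le_of_eq h1, h2⟩)
  have hbij : (hSfin.toFinset.filter
        (fun q => (Multiset.card ((ch q).filter (fun c => (v c.2 : ℤ) = f)) : ℤ) = y)).card
      = (hMBfin.toFinset ×ˢ hBfin.toFinset).card := by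
    apply Finset.card_bij'
      (i := fun q _ => (((ch q).filter (fun c => (v c.2 : ℤ) = f)).map Prod.snd,
        node (lp q) ((ch q).filter (fun c => ¬ (v c.2 : ℤ) = f))))
      (j := fun pr _ => node (lp pr.2) (pr.1.map (fun a => ((0 : ℕ), a)) + ch pr.2))
    · -- hi : image in product
      intro q hq
      rw [Finset.mem_filter, Set.Finite.mem_toFinset] at hq
      obtain ⟨hqS, hqy⟩ := hq
      obtain ⟨hA, hc1, hcf, hmem⟩ := forward_facts hf hqS
      have hcb : (Multiset.card ((ch q).filter (fun c => (v c.2 : ℤ) = f)) : ℤ) = y := hqy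
      rw [Finset.mem_product]
      constructor
      · rw [Set.Finite.mem_toFinset]
        refine ⟨by rw [Multiset.card_map]; omega, ?_⟩
        intro x hx
        obtain ⟨c, hc, rfl⟩ := Multiset.mem_map.1 hx
        exact (hA c hc).2
      · rw [Set.Finite.mem_toFinset]
        rw [hcb] at hmem
        exact hmem
    · -- hj : preimage in fiber
      intro pr hpr
      rw [Finset.mem_product, Set.Finite.mem_toFinset, Set.Finite.mem_toFinset] at hpr
      obtain ⟨⟨hMc, hMA⟩, hr⟩ := hpr
      have hMcZ : (Multiset.card pr.1 : ℤ) = y := by omega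
      obtain ⟨hmemE, hfil1, _⟩ := backward_facts hf hy1 hMA hMcZ hr
      rw [Finset.mem_filter, Set.Finite.mem_toFinset]
      refine ⟨hmemE, ?_⟩
      rw [hfil1, Multiset.card_map]
      exact hMcZ
    · -- left inverse
      intro q hq
      rw [Finset.mem_filter, Set.Finite.mem_toFinset] at hq
      obtain ⟨hqS, _⟩ := hq
      obtain ⟨hA, _, _, _⟩ := forward_facts hf hqS
      simp only [lp_node, ch_node]
      have hmapmap : (((ch q).filter (fun c => (v c.2 : ℤ) = f)).map Prod.snd).map
          (fun a => ((0 : ℕ), a)) = (ch q).filter (fun c => (v c.2 : ℤ) = f) := by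
        rw [Multiset.map_map]
        have := Multiset.map_congr (f := (fun a => ((0 : ℕ), a)) ∘ Prod.snd) (g := id) rfl
          (fun c hc => by
            have h0 := (hA c hc).1
            show ((0 : ℕ), c.2) = c
            rw [← h0])
        rw [this, Multiset.map_id]
      rw [hmapmap, Multiset.filter_add_not, node_lp_ch]
    · -- right inverse
      intro pr hpr
      rw [Finset.mem_product, Set.Finite.mem_toFinset, Set.Finite.mem_toFinset] at hpr
      obtain ⟨⟨hMc, hMA⟩, hr⟩ := hpr
      have hMcZ : (Multiset.card pr.1 : ℤ) = y := by omega
      obtain ⟨_, hfil1, hfil2⟩ := backward_facts hf hy1 hMA hMcZ hr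
      have h1 : ((ch (node (lp pr.2) (pr.1.map (fun a => ((0 : ℕ), a)) + ch pr.2))).filter
          (fun c => (v c.2 : ℤ) = f)).map Prod.snd = pr.1 := by
        rw [hfil1, Multiset.map_map]
        exact (congrArg _ rfl).trans (Multiset.map_id pr.1)
      have h2 : node (lp (node (lp pr.2) (pr.1.map (fun a => ((0 : ℕ), a)) + ch pr.2)))
          ((ch (node (lp pr.2) (pr.1.map (fun a => ((0 : ℕ), a)) + ch pr.2))).filter
            (fun c => ¬ (v c.2 : ℤ) = f)) = pr.2 := by
        rw [hfil2, lp_node, node_lp_ch]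
      exact Prod.ext h1 h2
  rw [hbij, Finset.card_product]
  congr 1
  · -- multiset count = w
    have h1 : hMBfin.toFinset.card = ({M : Multiset RTM | Multiset.card M = y.toNat ∧
        ∀ x ∈ M, x ∈ famLLLL f 0 0 (f - 1) 0 0 0}).ncard :=
      (Set.ncard_eq_toFinset_card _ hMBfin).symm
    rw [h1, card_multisets _ hAfin, w, Nat.multichoose_eq]
    rfl
  · exact (Set.ncard_eq_toFinset_card _ hBfin).symm
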